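/- Let ‖·‖₀, ‖·‖₁ be ultrametric norms on a d-dimensional vector space V over a non-Archimedean field, codiagonalized by a basis, and let ‖·‖ₜ be the geodesic joining them. Then t ↦ det(‖·‖ₜ) is the one-dimensional geodesic joining det(‖·‖₀) and det(‖·‖₁) in Λ^d V; concretely, det‖·‖ₜ(s₁∧⋯∧s_d) = (det‖·‖₀(s₁∧⋯∧s_d))^{1-t}·(det‖·‖₁(s₁∧⋯∧s_d))^t for a codiagonalizing basis (sᵢ). -/
import Mathlib

/-- The determinant norm of the geodesic of two ultrametric norms codiagonalized by a basis
`(sᵢ)` (with values `w0 i`, `w1 i` on the basis) is the one-dimensional geodesic of the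
determinant norms: concretely, `det‖·‖ₜ(s₁∧⋯∧s_d) = ∏ᵢ (w0 i)^(1-t) (w1 i)^t` equals
`(det‖·‖₀(s₁∧⋯∧s_d))^(1-t) · (det‖·‖₁(s₁∧⋯∧s_d))^t = (∏ᵢ w0 i)^(1-t) · (∏ᵢ w1 i)^t`. -/
theorem stmt_3 {ι : Type*} [Fintype ι] [Nonempty ι]
    (w0 w1 : ι → ℝ) (hw0 : ∀ i, 0 < w0 i) (hw1 : ∀ i, 0 < w1 i) :
    ∀ t ∈ Set.Icc (0:ℝ) 1,
      ∏ i, (w0 i ^ (1 - t) * w1 i ^ t)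
        = (∏ i, w0 i) ^ (1 - t) * (∏ i, w1 i) ^ t := by
  intro t _
  rw [Finset.prod_mul_distrib,
    ← Real.finset_prod_rpow _ _ (fun i _ => (hw0 i).le),
    ← Real.finset_prod_rpow _ _ (fun i _ => (hw1 i).le)]
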